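/- Let τ > 0, z₀ ∈ ℝ and t, ϑ ∈ ℝ satisfy cos ϑ = (τ² cosh² t + (τ t + z₀)²)/(2τ cosh t) (i.e. (t,ϑ) lies on the curve where the catenoid meets the unit sphere). Then ⟨κ̂(t,ϑ), ν(t,ϑ)⟩ = (1/(2τ))·(z₀ + τ t)²·sech² t − τ/2 + (z₀ + τ t)·tanh t. -/

import Mathlib

open scoped RealInnerProductSpace

noncomputable section

/-- The catenoid parametrization `κ̂(t,ϑ) = (1 − τ cosh t cos ϑ, τ cosh t sin ϑ, τ t + z₀)`. -/
def kappaHat (τ z₀ : ℝ) (t ϑ : ℝ) : EuclideanSpace ℝ (Fin 3) :=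
  !₂[1 - τ * Real.cosh t * Real.cos ϑ, τ * Real.cosh t * Real.sin ϑ, τ * t + z₀]

/-- The field `ν(t,ϑ) = (sech t cos ϑ, − sech t sin ϑ, tanh t)`. -/
def nuCat (t ϑ : ℝ) : EuclideanSpace ℝ (Fin 3) :=
  !₂[(Real.cosh t)⁻¹ * Real.cos ϑ, -((Real.cosh t)⁻¹ * Real.sin ϑ), Real.tanh t]

/-- Along the intersection curve of the catenoid with the unit sphere, i.e. where
`cos ϑ = (τ² cosh² t + (τ t + z₀)²)/(2τ cosh t)`, the function `Θ = ⟪κ̂, ν⟫` equals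
`(1/(2τ)) (z₀ + τ t)² sech² t − τ/2 + (z₀ + τ t) tanh t`. -/
theorem Theta_on_boundary_curve (τ z₀ t ϑ : ℝ) (hτ : 0 < τ)
    (hcurve : Real.cos ϑ =
      (τ ^ 2 * Real.cosh t ^ 2 + (τ * t + z₀) ^ 2) / (2 * τ * Real.cosh t)) :
    ⟪kappaHat τ z₀ t ϑ, nuCat t ϑ⟫ =
      1 / (2 * τ) * (z₀ + τ * t) ^ 2 * ((Real.cosh t)⁻¹) ^ 2 - τ / 2 +
        (z₀ + τ * t) * Real.tanh t := by
  have hc : Real.cosh t ≠ 0 := (Real.cosh_pos t).ne'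
  have hτ' : τ ≠ 0 := hτ.ne'
  have hpyth : Real.sin ϑ ^ 2 + Real.cos ϑ ^ 2 = 1 := Real.sin_sq_add_cos_sq ϑ
  simp only [kappaHat, nuCat, PiLp.inner_apply, RCLike.inner_apply, conj_trivial,
    Fin.sum_univ_three, Matrix.cons_val_zero, Matrix.cons_val_one, Matrix.head_cons,
    Matrix.cons_val_two, Matrix.tail_cons]
  rw [hcurve] at hpyth ⊢
  field_simp at hpyth ⊢
  linear_combination (-1) * hpyth

end
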